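/- Let b ≥ 2, s ≥ 1, n ≥ 2, and let P_n = (V_1,…,V_n) be points in [0,1)^s such that for each j the j-th coordinates V_{1,j},…,V_{n,j} are pairwise distinct, with associated function ψ. Let x, y ∈ [0,1]^s and let (t_k)_{k ∈ ℕ^s} be the coefficients t_k = ∏_{j=1}^s t_{j,k_j}, where t_{j,0} = b·V_0(x_j,y_j)/(b−1) and t_{j,k} = (b·V_k(x_j,y_j) − V_{k−1}(x_j,y_j))/(b−1) for k ≥ 1. Then the Lebesgue integral of ψ over R(x,y) equals Σ_{k ∈ ℕ^s} t_k · C_b(k;P_n); in particular, for any real number C such that C_b(k;P_n) ≤ C for all k ∈ ℕ^s, the integral of ψ over R(x,y) is at most C · ∏_{j=1}^s x_j·y_j. -/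

import Mathlib

open MeasureTheory
open scoped Classical

noncomputable def gammaB (b : ℕ) (x y : ℝ) : ℕ∞ :=
  if x = y then ⊤
  else (↑(sInf {i : ℕ | ⌊(b : ℝ) ^ i * x⌋ = ⌊(b : ℝ) ^ i * y⌋ ∧
      ⌊(b : ℝ) ^ (i + 1) * x⌋ ≠ ⌊(b : ℝ) ^ (i + 1) * y⌋}) : ℕ∞)

def Dset (b : ℕ) (i : ℕ) : Set (ℝ × ℝ) :=
  {p | p.1 ∈ Set.Ico (0 : ℝ) 1 ∧ p.2 ∈ Set.Ico (0 : ℝ) 1 ∧ gammaB b p.1 p.2 = (i : ℕ∞)}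

noncomputable def Vi (b : ℕ) (i : ℕ) (x y : ℝ) : ℝ :=
  (volume ((Set.Ico (0 : ℝ) x ×ˢ Set.Ico (0 : ℝ) y) ∩ Dset b i)).toReal

noncomputable def mB {n s : ℕ} (b : ℕ) (P : Fin n → Fin s → ℝ) (k : Fin s → ℕ) (l : Fin n) : ℕ :=
  (Finset.univ.filter fun j : Fin n =>
    j ≠ l ∧ ∀ r : Fin s, (k r : ℕ∞) ≤ gammaB b (P l r) (P j r)).card

noncomputable def nB {n s : ℕ} (b : ℕ) (P : Fin n → Fin s → ℝ) (i : Fin s → ℕ) (l : Fin n) : ℕ :=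
  (Finset.univ.filter fun j : Fin n =>
    j ≠ l ∧ ∀ r : Fin s, gammaB b (P l r) (P j r) = (i r : ℕ∞)).card

noncomputable def MB {n s : ℕ} (b : ℕ) (P : Fin n → Fin s → ℝ) (k : Fin s → ℕ) : ℕ :=
  ∑ l : Fin n, mB b P k l

noncomputable def NB {n s : ℕ} (b : ℕ) (P : Fin n → Fin s → ℝ) (i : Fin s → ℕ) : ℕ :=
  ∑ l : Fin n, nB b P i l

noncomputable def CB {n s : ℕ} (b : ℕ) (P : Fin n → Fin s → ℝ) (k : Fin s → ℕ) : ℝ :=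
  (b : ℝ) ^ (∑ j, k j) * (MB b P k : ℝ) / ((n : ℝ) * ((n : ℝ) - 1))

def DsetS (b s : ℕ) (i : Fin s → ℕ) : Set ((Fin s → ℝ) × (Fin s → ℝ)) :=
  {p | (∀ j, p.1 j ∈ Set.Ico (0 : ℝ) 1) ∧ (∀ j, p.2 j ∈ Set.Ico (0 : ℝ) 1) ∧
    ∀ j, gammaB b (p.1 j) (p.2 j) = (i j : ℕ∞)}

def Rset (s : ℕ) (x y : Fin s → ℝ) : Set ((Fin s → ℝ) × (Fin s → ℝ)) :=
  (Set.univ.pi fun j => Set.Ico 0 (x j)) ×ˢ (Set.univ.pi fun j => Set.Ico 0 (y j))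

noncomputable def ViS (b s : ℕ) (i : Fin s → ℕ) (x y : Fin s → ℝ) : ℝ :=
  (volume (Rset s x y ∩ DsetS b s i)).toReal

noncomputable def psi {n s : ℕ} (b : ℕ) (P : Fin n → Fin s → ℝ) (x y : Fin s → ℝ) : ℝ :=
  if ∀ j, gammaB b (x j) (y j) ≠ ⊤ then
    (NB b P (fun j => (gammaB b (x j) (y j)).toNat) : ℝ) *
      (b : ℝ) ^ (s + ∑ j, (gammaB b (x j) (y j)).toNat) /
      (((b : ℝ) - 1) ^ s * ((n : ℝ) * ((n : ℝ) - 1)))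
  else 0

noncomputable def tCoef (b : ℕ) (x y : ℝ) : ℕ → ℝ
  | 0 => (b : ℝ) * Vi b 0 x y / ((b : ℝ) - 1)
  | (k + 1) => ((b : ℝ) * Vi b (k + 1) x y - Vi b k x y) / ((b : ℝ) - 1)

section FloorLemmas
variable {b : ℕ}

lemma floor_lt_floor_mul (hb : 1 ≤ b) {u v : ℝ} (h : ⌊u⌋ < ⌊v⌋) :
    ⌊(b:ℝ)*u⌋ < ⌊(b:ℝ)*v⌋ := by
  have hb0 : (0:ℝ) < b := by exact_mod_cast hb
  have h1 : (b:ℝ)*u < ((b*(⌊u⌋+1) : ℤ) : ℝ) := by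
    push_cast
    have := Int.lt_floor_add_one u
    nlinarith
  have h2 : ((b*(⌊u⌋+1) : ℤ) : ℝ) ≤ (b:ℝ)*v := by
    push_cast
    have h3 : (⌊u⌋:ℝ)+1 ≤ ⌊v⌋ := by exact_mod_cast h
    have h4 : ((⌊v⌋:ℝ)) ≤ v := Int.floor_le v
    nlinarith
  calc ⌊(b:ℝ)*u⌋ < b*(⌊u⌋+1) := Int.floor_lt.2 h1
    _ ≤ ⌊(b:ℝ)*v⌋ := Int.le_floor.2 h2

lemma floor_eq_of_mul (hb : 1 ≤ b) {u v : ℝ} (h : ⌊(b:ℝ)*u⌋ = ⌊(b:ℝ)*v⌋) :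
    ⌊u⌋ = ⌊v⌋ := by
  rcases lt_trichotomy ⌊u⌋ ⌊v⌋ with h'|h'|h'
  · exact absurd h (floor_lt_floor_mul hb h').ne
  · exact h'
  · exact absurd h.symm (floor_lt_floor_mul hb h').ne

lemma pow_succ_mul (x : ℝ) (i : ℕ) : (b:ℝ)^(i+1)*x = (b:ℝ)*((b:ℝ)^i*x) := by ring

lemma floor_eq_desc (hb : 1 ≤ b) {x y : ℝ} {m m' : ℕ} (hmm : m ≤ m')
    (h : ⌊(b:ℝ)^m'*x⌋ = ⌊(b:ℝ)^m'*y⌋) : ⌊(b:ℝ)^m*x⌋ = ⌊(b:ℝ)^m*y⌋ := by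
  induction m' , hmm using Nat.le_induction with
  | base => exact h
  | succ k hk ih =>
    refine ih ?_
    refine floor_eq_of_mul hb ?_
    rw [← pow_succ_mul, ← pow_succ_mul]; exact h

lemma floor_lt_asc (hb : 1 ≤ b) {x y : ℝ} {m m' : ℕ} (hmm : m ≤ m')
    (h : ⌊(b:ℝ)^m*x⌋ < ⌊(b:ℝ)^m*y⌋) : ⌊(b:ℝ)^m'*x⌋ < ⌊(b:ℝ)^m'*y⌋ := by
  induction m' , hmm using Nat.le_induction with
  | base => exact h
  | succ k hk ih =>
    rw [pow_succ_mul, pow_succ_mul]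
    exact floor_lt_floor_mul hb ih

lemma floor_ne_asc (hb : 1 ≤ b) {x y : ℝ} {m m' : ℕ} (hmm : m ≤ m')
    (h : ⌊(b:ℝ)^m*x⌋ ≠ ⌊(b:ℝ)^m*y⌋) : ⌊(b:ℝ)^m'*x⌋ ≠ ⌊(b:ℝ)^m'*y⌋ :=
  fun he => h (floor_eq_desc hb hmm he)

end FloorLemmas
section GammaLemmas
variable {b : ℕ}

/-- the defining set of `gammaB` -/
def gSet (b : ℕ) (x y : ℝ) : Set ℕ :=
  {i : ℕ | ⌊(b : ℝ) ^ i * x⌋ = ⌊(b : ℝ) ^ i * y⌋ ∧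
      ⌊(b : ℝ) ^ (i + 1) * x⌋ ≠ ⌊(b : ℝ) ^ (i + 1) * y⌋}

lemma gSet_nonempty (hb : 2 ≤ b) {x y : ℝ} (hx : x ∈ Set.Ico (0:ℝ) 1)
    (hy : y ∈ Set.Ico (0:ℝ) 1) (hxy : x ≠ y) : (gSet b x y).Nonempty := by
  have hb1 : (1:ℝ) < b := by exact_mod_cast hb
  have hb1' : 1 ≤ b := le_trans (by norm_num) hb
  -- there exists m with floors different
  have hex : ∃ m : ℕ, ⌊(b:ℝ)^m*x⌋ ≠ ⌊(b:ℝ)^m*y⌋ := by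
    obtain ⟨m, hm⟩ := pow_unbounded_of_one_lt (1/|x-y|) hb1
    refine ⟨m, fun he => ?_⟩
    have h1 : |(b:ℝ)^m*x - (b:ℝ)^m*y| < 1 := Int.abs_sub_lt_one_of_floor_eq_floor he
    have h2 : |x - y| > 0 := abs_pos.2 (sub_ne_zero.2 hxy)
    have h3 : |(b:ℝ)^m*x - (b:ℝ)^m*y| = (b:ℝ)^m * |x-y| := by
      rw [← mul_sub, abs_mul, abs_of_nonneg (by positivity)]
    rw [h3] at h1
    rw [div_lt_iff₀ h2] at hm
    nlinarith
  classical
  set B := {m : ℕ | ⌊(b:ℝ)^m*x⌋ ≠ ⌊(b:ℝ)^m*y⌋} with hB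
  have hBne : B.Nonempty := hex
  have h0 : 0 ∉ B := by
    simp only [hB, Set.mem_setOf_eq, pow_zero, one_mul, not_not]
    rw [Int.floor_eq_zero_iff.2 hx, Int.floor_eq_zero_iff.2 hy]
  have hmem := Nat.sInf_mem hBne
  rcases Nat.eq_zero_or_pos (sInf B) with h|h
  · exact absurd (h ▸ hmem) h0
  · obtain ⟨k, hk⟩ := Nat.exists_eq_add_of_lt h
    refine ⟨sInf B - 1, ?_, ?_⟩
    · have : sInf B - 1 < sInf B := by omega
      have := Nat.notMem_of_lt_sInf this
      simpa [hB, Set.mem_setOf_eq, not_not] using this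
    · have : sInf B - 1 + 1 = sInf B := by omega
      rw [this]; exact hmem

lemma gammaB_eq_coe_iff (hb : 2 ≤ b) {x y : ℝ} (hx : x ∈ Set.Ico (0:ℝ) 1)
    (hy : y ∈ Set.Ico (0:ℝ) 1) (i : ℕ) :
    gammaB b x y = (i : ℕ∞) ↔ i ∈ gSet b x y := by
  have hb1 : 1 ≤ b := le_trans (by norm_num) hb
  rcases eq_or_ne x y with rfl|hxy
  · simp only [gammaB, if_pos rfl]
    constructor
    · intro h; exact absurd h.symm (by simp)
    · rintro ⟨-, h2⟩; exact absurd rfl h2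
  · rw [gammaB, if_neg hxy]
    have hne := gSet_nonempty hb hx hy hxy
    constructor
    · intro h
      have h' : ((sInf (gSet b x y) : ℕ) : ℕ∞) = (i : ℕ∞) := h
      have : sInf (gSet b x y) = i := by exact_mod_cast h'
      exact this ▸ Nat.sInf_mem hne
    · intro hi
      have hle : sInf (gSet b x y) ≤ i := Nat.sInf_le hi
      have hge : i ≤ sInf (gSet b x y) := by
        by_contra hlt
        push_neg at hlt
        have hmem := Nat.sInf_mem hne
        -- sInf < i, sInf ∈ gSet: ne at sInf+1 propagates to ne at i
        have hne2 : ⌊(b:ℝ)^i*x⌋ ≠ ⌊(b:ℝ)^i*y⌋ :=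
          floor_ne_asc hb1 (by omega : sInf (gSet b x y) + 1 ≤ i) hmem.2
        exact hne2 hi.1
      have h2 : sInf (gSet b x y) = i := le_antisymm hle hge
      exact congrArg _ h2
    
lemma gammaB_ne_top (hb : 2 ≤ b) {x y : ℝ} (hx : x ∈ Set.Ico (0:ℝ) 1)
    (hy : y ∈ Set.Ico (0:ℝ) 1) (hxy : x ≠ y) : gammaB b x y ≠ ⊤ := by
  rw [gammaB, if_neg hxy]
  simp

lemma gammaB_eq_toNat (hb : 2 ≤ b) {x y : ℝ} (hx : x ∈ Set.Ico (0:ℝ) 1)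
    (hy : y ∈ Set.Ico (0:ℝ) 1) (hxy : x ≠ y) :
    gammaB b x y = ((gammaB b x y).toNat : ℕ∞) :=
  (ENat.coe_toNat (gammaB_ne_top hb hx hy hxy)).symm

end GammaLemmas

section WvSection
variable {b : ℕ}

/-- pairs in the unit square whose coordinates share the first `L` base-`b` digits -/
def Aset (b L : ℕ) : Set (ℝ × ℝ) :=
  {p | p.1 ∈ Set.Ico (0:ℝ) 1 ∧ p.2 ∈ Set.Ico (0:ℝ) 1 ∧
    ⌊(b:ℝ)^L * p.1⌋ = ⌊(b:ℝ)^L * p.2⌋}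

noncomputable def Wv (b L : ℕ) (x y : ℝ) : ℝ :=
  (volume ((Set.Ico (0:ℝ) x ×ˢ Set.Ico (0:ℝ) y) ∩ Aset b L)).toReal

lemma measurableSet_floorEq (c : ℝ) :
    MeasurableSet {p : ℝ × ℝ | ⌊c * p.1⌋ = ⌊c * p.2⌋} := by
  have hf : Measurable fun p : ℝ × ℝ => ⌊c * p.1⌋ :=
    Int.measurable_floor.comp (measurable_const.mul measurable_fst)
  have hg : Measurable fun p : ℝ × ℝ => ⌊c * p.2⌋ :=
    Int.measurable_floor.comp (measurable_const.mul measurable_snd)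
  exact measurableSet_eq_fun hf hg

lemma measurableSet_Aset (b L : ℕ) : MeasurableSet (Aset b L) := by
  have : Aset b L = ((Set.Ico (0:ℝ) 1 ×ˢ Set.Ico (0:ℝ) 1) ∩
      {p : ℝ × ℝ | ⌊(b:ℝ)^L * p.1⌋ = ⌊(b:ℝ)^L * p.2⌋}) := by
    ext p; simp [Aset, Set.mem_prod, and_assoc]
  rw [this]
  exact (measurableSet_Ico.prod measurableSet_Ico).inter (measurableSet_floorEq _)

lemma Dset_eq (hb : 2 ≤ b) (i : ℕ) :
    Dset b i = ((Set.Ico (0:ℝ) 1 ×ˢ Set.Ico (0:ℝ) 1) ∩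
      ({p : ℝ × ℝ | ⌊(b:ℝ)^i * p.1⌋ = ⌊(b:ℝ)^i * p.2⌋} \
       {p : ℝ × ℝ | ⌊(b:ℝ)^(i+1) * p.1⌋ = ⌊(b:ℝ)^(i+1) * p.2⌋})) := by
  ext p
  simp only [Dset, Set.mem_setOf_eq, Set.mem_inter_iff, Set.mem_prod, Set.mem_diff]
  constructor
  · rintro ⟨h1, h2, h3⟩
    have := (gammaB_eq_coe_iff hb h1 h2 i).1 h3
    exact ⟨⟨h1, h2⟩, this.1, this.2⟩
  · rintro ⟨⟨h1, h2⟩, h3, h4⟩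
    exact ⟨h1, h2, (gammaB_eq_coe_iff hb h1 h2 i).2 ⟨h3, h4⟩⟩

lemma measurableSet_Dset (hb : 2 ≤ b) (i : ℕ) : MeasurableSet (Dset b i) := by
  rw [Dset_eq hb]
  exact (measurableSet_Ico.prod measurableSet_Ico).inter
    ((measurableSet_floorEq _).diff (measurableSet_floorEq _))

lemma Aset_anti (hb : 2 ≤ b) (L : ℕ) : Aset b (L+1) ⊆ Aset b L := by
  rintro ⟨u, v⟩ ⟨h1, h2, h3⟩
  refine ⟨h1, h2, ?_⟩
  refine floor_eq_of_mul (le_trans (by norm_num) hb) ?_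
  rw [← pow_succ_mul, ← pow_succ_mul]; exact h3

lemma Aset_vol_ne_top (b L : ℕ) (S : Set (ℝ × ℝ)) :
    volume (S ∩ Aset b L) ≠ ⊤ := by
  refine ne_of_lt (lt_of_le_of_lt (measure_mono ?_) (?_ :
    volume (Set.Ico (0:ℝ) 1 ×ˢ Set.Ico (0:ℝ) 1) < ⊤))
  · rintro ⟨u,v⟩ ⟨-, h1, h2, -⟩; exact ⟨h1, h2⟩
  · rw [Measure.volume_eq_prod, Measure.prod_prod, Real.volume_Ico]
    simp

lemma Vi_eq_sub (hb : 2 ≤ b) {x y : ℝ} (hx : x ∈ Set.Icc (0:ℝ) 1)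
    (hy : y ∈ Set.Icc (0:ℝ) 1) (i : ℕ) :
    Vi b i x y = Wv b i x y - Wv b (i+1) x y := by
  have hsub : ∀ z : ℝ, z ≤ 1 → Set.Ico (0:ℝ) z ⊆ Set.Ico (0:ℝ) 1 := by
    intro z hz w hw; exact ⟨hw.1, lt_of_lt_of_le hw.2 hz⟩
  set box := Set.Ico (0:ℝ) x ×ˢ Set.Ico (0:ℝ) y with hbox
  have hkey : box ∩ Dset b i = (box ∩ Aset b i) \ (box ∩ Aset b (i+1)) := by
    ext ⟨u, v⟩
    simp only [Set.mem_inter_iff, Set.mem_diff, hbox, Set.mem_prod]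
    constructor
    · rintro ⟨⟨hu, hv⟩, h1, h2, h3⟩
      have hc := (gammaB_eq_coe_iff hb h1 h2 i).1 h3
      exact ⟨⟨⟨hu, hv⟩, h1, h2, hc.1⟩, fun hcon => hc.2 hcon.2.2.2⟩
    · rintro ⟨⟨⟨hu, hv⟩, h1, h2, h3⟩, h4⟩
      have h5 : ⌊(b:ℝ)^(i+1) * u⌋ ≠ ⌊(b:ℝ)^(i+1) * v⌋ := by
        intro hcon; exact h4 ⟨⟨hu, hv⟩, h1, h2, hcon⟩
      exact ⟨⟨hu, hv⟩, h1, h2, (gammaB_eq_coe_iff hb h1 h2 i).2 ⟨h3, h5⟩⟩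
  have hmono : box ∩ Aset b (i+1) ⊆ box ∩ Aset b i :=
    Set.inter_subset_inter_right _ (Aset_anti hb i)
  have hmeas : NullMeasurableSet (box ∩ Aset b (i+1)) volume :=
    ((measurableSet_Ico.prod measurableSet_Ico).inter (measurableSet_Aset b (i+1))).nullMeasurableSet
  rw [Vi, hkey, measure_diff hmono hmeas (Aset_vol_ne_top b (i+1) box),
    Wv, Wv, ENNReal.toReal_sub_of_le (measure_mono hmono) (Aset_vol_ne_top b i box)]

noncomputable def lenI (b L : ℕ) (z : ℝ) (t : ℕ) : ℝ :=
  (volume (Set.Ico (0:ℝ) z ∩ Set.Ico ((t:ℝ)/(b:ℝ)^L) (((t:ℝ)+1)/(b:ℝ)^L))).toReal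

lemma lenI_eval (b L : ℕ) (hb : 2 ≤ b) (z : ℝ) (t : ℕ) :
    lenI b L z t = max (min z (((t:ℝ)+1)/(b:ℝ)^L) - (t:ℝ)/(b:ℝ)^L) 0 := by
  have hB : (0:ℝ) < (b:ℝ)^L := by positivity
  have h0 : max (0:ℝ) ((t:ℝ)/(b:ℝ)^L) = (t:ℝ)/(b:ℝ)^L := by
    rw [max_eq_right]; positivity
  rw [lenI, Set.Ico_inter_Ico, h0, Real.volume_Ico, ENNReal.toReal_ofReal']

lemma lenI_nonneg (b L : ℕ) (z : ℝ) (t : ℕ) : 0 ≤ lenI b L z t :=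
  ENNReal.toReal_nonneg

lemma lenI_le (b L : ℕ) (hb : 2 ≤ b) (z : ℝ) (t : ℕ) :
    lenI b L z t ≤ 1/(b:ℝ)^L := by
  have hB : (0:ℝ) < (b:ℝ)^L := by positivity
  rw [lenI_eval b L hb]
  rw [max_le_iff]
  constructor
  · have : min z (((t:ℝ)+1)/(b:ℝ)^L) ≤ ((t:ℝ)+1)/(b:ℝ)^L := min_le_right _ _
    have h2 : ((t:ℝ)+1)/(b:ℝ)^L - (t:ℝ)/(b:ℝ)^L = 1/(b:ℝ)^L := by field_simp; ring
    linarith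
  · positivity

lemma Wv_eq_sum (hb : 2 ≤ b) {x y : ℝ} (hx : x ∈ Set.Icc (0:ℝ) 1)
    (hy : y ∈ Set.Icc (0:ℝ) 1) (L : ℕ) :
    Wv b L x y = ∑ t ∈ Finset.range (b^L), lenI b L x t * lenI b L y t := by
  have hb0 : (0:ℝ) < b := by positivity
  have hB : (0:ℝ) < (b:ℝ)^L := by positivity
  have hBn : ((b^L : ℕ) : ℝ) = (b:ℝ)^L := by push_cast; ring
  set B := (b:ℝ)^L with hBdef
  have hset : (Set.Ico (0:ℝ) x ×ˢ Set.Ico (0:ℝ) y) ∩ Aset b L =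
      ⋃ t ∈ Finset.range (b^L),
        (Set.Ico (0:ℝ) x ∩ Set.Ico ((t:ℝ)/B) (((t:ℝ)+1)/B)) ×ˢ
        (Set.Ico (0:ℝ) y ∩ Set.Ico ((t:ℝ)/B) (((t:ℝ)+1)/B)) := by
    ext ⟨u, v⟩
    simp only [Set.mem_inter_iff, Set.mem_prod, Set.mem_iUnion, Finset.mem_range,
      Set.mem_Ico, exists_prop]
    constructor
    · rintro ⟨⟨⟨hu0, hux⟩, hv0, hvy⟩, ⟨-, hu1⟩, ⟨-, hv1⟩, hfl⟩
      have hz0 : 0 ≤ ⌊B * u⌋ := Int.floor_nonneg.2 (by positivity)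
      have hzB : ⌊B * u⌋ < (b^L : ℕ) := by
        rw [Int.floor_lt]
        push_cast
        nlinarith
      refine ⟨⌊B * u⌋.toNat, by omega, ?_⟩
      have hcast : ((⌊B * u⌋.toNat : ℕ) : ℝ) = ((⌊B * u⌋ : ℤ) : ℝ) := by
        exact_mod_cast congrArg (Int.cast : ℤ → ℝ) (Int.toNat_of_nonneg hz0)
      have hfl1 : ((⌊B * u⌋ : ℤ) : ℝ) ≤ B * u := Int.floor_le _
      have hfl2 : B * u < ((⌊B * u⌋ : ℤ) : ℝ) + 1 := Int.lt_floor_add_one _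
      have hfl1' : ((⌊B * u⌋ : ℤ) : ℝ) ≤ B * v := by rw [hfl]; exact Int.floor_le _
      have hfl2' : B * v < ((⌊B * u⌋ : ℤ) : ℝ) + 1 := by rw [hfl]; exact Int.lt_floor_add_one _
      rw [hcast]
      have e1 : ((⌊B * u⌋ : ℤ) : ℝ)/B ≤ u := by rw [div_le_iff₀ hB]; nlinarith
      have e2 : u < (((⌊B * u⌋ : ℤ) : ℝ)+1)/B := by rw [lt_div_iff₀ hB]; nlinarith
      have e3 : ((⌊B * u⌋ : ℤ) : ℝ)/B ≤ v := by rw [div_le_iff₀ hB]; nlinarith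
      have e4 : v < (((⌊B * u⌋ : ℤ) : ℝ)+1)/B := by rw [lt_div_iff₀ hB]; nlinarith
      exact ⟨⟨⟨hu0, hux⟩, e1, e2⟩, ⟨hv0, hvy⟩, e3, e4⟩
    · rintro ⟨t, htL, ⟨⟨hu0, hux⟩, hut1, hut2⟩, ⟨hv0, hvy⟩, hvt1, hvt2⟩
      have ht1 : (t:ℝ) + 1 ≤ (b^L : ℕ) := by exact_mod_cast Nat.succ_le_of_lt htL
      have htB : ((t:ℝ)+1)/B ≤ 1 := by
        rw [div_le_one hB]
        have h5 : ((t:ℝ)+1) ≤ ((b:ℝ))^L := by exact_mod_cast ht1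
        exact h5
      have hu1 : u < 1 := by linarith
      have hv1 : v < 1 := by linarith
      have hu0' : 0 ≤ u := hu0
      have hfu : ⌊B * u⌋ = (t:ℤ) := by
        rw [Int.floor_eq_iff]
        push_cast
        rw [div_le_iff₀ hB] at hut1
        rw [lt_div_iff₀ hB] at hut2
        constructor <;> nlinarith
      have hfv : ⌊B * v⌋ = (t:ℤ) := by
        rw [Int.floor_eq_iff]
        push_cast
        rw [div_le_iff₀ hB] at hvt1
        rw [lt_div_iff₀ hB] at hvt2
        constructor <;> nlinarith
      exact ⟨⟨⟨hu0, hux⟩, hv0, hvy⟩, ⟨hu0, hu1⟩, ⟨hv0, hv1⟩, by rw [hfu, hfv]⟩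
  rw [Wv, hset, measure_biUnion_finset ?_ ?_]
  · rw [ENNReal.toReal_sum]
    · refine Finset.sum_congr rfl fun t ht => ?_
      rw [Measure.volume_eq_prod, Measure.prod_prod, ENNReal.toReal_mul]
      rfl
    · intro t ht
      rw [Measure.volume_eq_prod, Measure.prod_prod]
      exact ENNReal.mul_ne_top
        (ne_of_lt (lt_of_le_of_lt (measure_mono (Set.inter_subset_right))
          (by rw [Real.volume_Ico]; exact ENNReal.ofReal_lt_top)))
        (ne_of_lt (lt_of_le_of_lt (measure_mono (Set.inter_subset_right))
          (by rw [Real.volume_Ico]; exact ENNReal.ofReal_lt_top)))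
  · have hgen : ∀ a a' : ℕ, a < a' → Disjoint
        ((Set.Ico (0:ℝ) x ∩ Set.Ico ((a:ℝ)/B) (((a:ℝ)+1)/B)) ×ˢ
          (Set.Ico (0:ℝ) y ∩ Set.Ico ((a:ℝ)/B) (((a:ℝ)+1)/B)))
        ((Set.Ico (0:ℝ) x ∩ Set.Ico ((a':ℝ)/B) (((a':ℝ)+1)/B)) ×ˢ
          (Set.Ico (0:ℝ) y ∩ Set.Ico ((a':ℝ)/B) (((a':ℝ)+1)/B))) := by
      intro a a' haa
      rw [Set.disjoint_left]
      rintro ⟨u, v⟩ ⟨⟨-, h1, h2⟩, -⟩ ⟨⟨-, h1', h2'⟩, -⟩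
      have hc : ((a:ℝ)+1) ≤ (a':ℝ) := by exact_mod_cast haa
      have h3 : ((a:ℝ)+1)/B ≤ (a':ℝ)/B := (div_le_div_iff_of_pos_right hB).2 hc
      linarith
    intro t ht t' ht' htt
    rcases lt_or_gt_of_ne htt with h|h
    · exact hgen t t' h
    · exact (hgen t' t h).symm
  · intro t ht
    exact ((measurableSet_Ico.inter measurableSet_Ico).prod
      (measurableSet_Ico.inter measurableSet_Ico))

end WvSection

section Closed
variable {b : ℕ}

lemma floor_facts (hb : 2 ≤ b) {x : ℝ} (hx : x ∈ Set.Icc (0:ℝ) 1) (L : ℕ) :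
    ∃ p : ℕ, ⌊(b:ℝ)^L * x⌋ = (p:ℤ) ∧ p ≤ b^L ∧
      (p:ℝ)/(b:ℝ)^L ≤ x ∧ x < ((p:ℝ)+1)/(b:ℝ)^L := by
  have hB : (0:ℝ) < (b:ℝ)^L := by positivity
  have hz0 : 0 ≤ ⌊(b:ℝ)^L * x⌋ := Int.floor_nonneg.2 (by nlinarith [hx.1])
  refine ⟨⌊(b:ℝ)^L * x⌋.toNat, (Int.toNat_of_nonneg hz0).symm, ?_, ?_, ?_⟩
  · have h1 : ⌊(b:ℝ)^L * x⌋ ≤ ⌊((b^L : ℕ) : ℝ)⌋ := by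
      apply Int.floor_le_floor
      push_cast
      nlinarith [hx.2]
    rw [Int.floor_natCast] at h1
    omega
  · have hcast : ((⌊(b:ℝ)^L * x⌋.toNat : ℕ) : ℝ) = ((⌊(b:ℝ)^L * x⌋ : ℤ) : ℝ) := by
      exact_mod_cast congrArg (Int.cast : ℤ → ℝ) (Int.toNat_of_nonneg hz0)
    rw [hcast, div_le_iff₀ hB]
    nlinarith [Int.floor_le ((b:ℝ)^L * x)]
  · have hcast : ((⌊(b:ℝ)^L * x⌋.toNat : ℕ) : ℝ) = ((⌊(b:ℝ)^L * x⌋ : ℤ) : ℝ) := by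
      exact_mod_cast congrArg (Int.cast : ℤ → ℝ) (Int.toNat_of_nonneg hz0)
    rw [hcast, lt_div_iff₀ hB]
    nlinarith [Int.lt_floor_add_one ((b:ℝ)^L * x)]

lemma lenI_eq_of_lt (hb : 2 ≤ b) {x : ℝ} {p t : ℕ} {L : ℕ} (ht : t < p)
    (hp1 : (p:ℝ)/(b:ℝ)^L ≤ x) : lenI b L x t = 1/(b:ℝ)^L := by
  have hB : (0:ℝ) < (b:ℝ)^L := by positivity
  have h1 : ((t:ℝ)+1)/(b:ℝ)^L ≤ (p:ℝ)/(b:ℝ)^L := by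
    apply (div_le_div_iff_of_pos_right hB).2
    exact_mod_cast Nat.succ_le_of_lt ht
  rw [lenI_eval b L hb, min_eq_right (le_trans h1 hp1)]
  rw [max_eq_left]
  · field_simp; ring
  · have : (t:ℝ)/(b:ℝ)^L ≤ ((t:ℝ)+1)/(b:ℝ)^L := (div_le_div_iff_of_pos_right hB).2 (by linarith)
    linarith

lemma lenI_eq_self (hb : 2 ≤ b) {x : ℝ} {p : ℕ} {L : ℕ}
    (hp1 : (p:ℝ)/(b:ℝ)^L ≤ x) (hp2 : x < ((p:ℝ)+1)/(b:ℝ)^L) :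
    lenI b L x p = x - (p:ℝ)/(b:ℝ)^L := by
  rw [lenI_eval b L hb, min_eq_left hp2.le, max_eq_left (by linarith)]

lemma lenI_eq_zero (hb : 2 ≤ b) {x : ℝ} {p t : ℕ} {L : ℕ} (ht : p < t)
    (hp2 : x < ((p:ℝ)+1)/(b:ℝ)^L) : lenI b L x t = 0 := by
  have hB : (0:ℝ) < (b:ℝ)^L := by positivity
  have h1 : ((p:ℝ)+1)/(b:ℝ)^L ≤ (t:ℝ)/(b:ℝ)^L := by
    apply (div_le_div_iff_of_pos_right hB).2
    exact_mod_cast Nat.succ_le_of_lt ht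
  have h2 : (t:ℝ)/(b:ℝ)^L ≤ ((t:ℝ)+1)/(b:ℝ)^L := (div_le_div_iff_of_pos_right hB).2 (by linarith)
  rw [lenI_eval b L hb, min_eq_left (by linarith), max_eq_right (by linarith)]

lemma Wv_split (hb : 2 ≤ b) {x y : ℝ} (hx : x ∈ Set.Icc (0:ℝ) 1)
    (hy : y ∈ Set.Icc (0:ℝ) 1) {L : ℕ}
    (hpq : ⌊(b:ℝ)^L * x⌋ < ⌊(b:ℝ)^L * y⌋) : Wv b L x y = x/(b:ℝ)^L := by
  have hB : (0:ℝ) < (b:ℝ)^L := by positivity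
  obtain ⟨p, hp, hpL, hp1, hp2⟩ := floor_facts hb hx L
  obtain ⟨q, hq, hqL, hq1, hq2⟩ := floor_facts hb hy L
  have hpq' : p < q := by rw [hp, hq] at hpq; exact_mod_cast hpq
  rw [Wv_eq_sum hb hx hy L]
  rw [← Finset.sum_subset (Finset.range_subset_range.2 (by omega : p + 1 ≤ b^L))
    (fun t ht hts => by
      rw [lenI_eq_zero hb (by simp at hts; omega) hp2, zero_mul])]
  rw [Finset.sum_range_succ]
  have hconst : ∀ t ∈ Finset.range p, lenI b L x t * lenI b L y t =
      (1/(b:ℝ)^L) * (1/(b:ℝ)^L) := by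
    intro t ht
    simp only [Finset.mem_range] at ht
    rw [lenI_eq_of_lt hb ht hp1, lenI_eq_of_lt hb (by omega) hq1]
  rw [Finset.sum_congr rfl hconst, Finset.sum_const, Finset.card_range,
    lenI_eq_self hb hp1 hp2, lenI_eq_of_lt hb hpq' hq1, nsmul_eq_mul]
  field_simp
  ring

lemma Wv_same (hb : 2 ≤ b) {x y : ℝ} (hx : x ∈ Set.Icc (0:ℝ) 1)
    (hy : y ∈ Set.Icc (0:ℝ) 1) {L : ℕ} {p : ℕ}
    (hfx : ⌊(b:ℝ)^L * x⌋ = (p:ℤ)) (hfy : ⌊(b:ℝ)^L * y⌋ = (p:ℤ)) (hx1 : x < 1) :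
    Wv b L x y = (p:ℝ)/((b:ℝ)^L * (b:ℝ)^L)
      + (x - (p:ℝ)/(b:ℝ)^L) * (y - (p:ℝ)/(b:ℝ)^L) := by
  have hB : (0:ℝ) < (b:ℝ)^L := by positivity
  obtain ⟨p', hp, hpL, hp1, hp2⟩ := floor_facts hb hx L
  have hpp : p' = p := by rw [hp] at hfx; exact_mod_cast hfx
  obtain ⟨q', hq, hqL, hq1, hq2⟩ := floor_facts hb hy L
  have hqq : q' = p := by rw [hq] at hfy; exact_mod_cast hfy
  rw [hpp] at hp hpL hp1 hp2
  rw [hqq] at hq hqL hq1 hq2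
  have hplt : p < b^L := by
    have h1 : ((p:ℝ)) < (b:ℝ)^L := by
      have h2 : ((p:ℝ)) ≤ (b:ℝ)^L * x := by rw [div_le_iff₀ hB] at hp1; nlinarith
      nlinarith
    exact_mod_cast (by push_cast; exact h1 : ((p:ℝ)) < ((b^L : ℕ):ℝ))
  rw [Wv_eq_sum hb hx hy L]
  rw [← Finset.sum_subset (Finset.range_subset_range.2 (by omega : p + 1 ≤ b^L))
    (fun t ht hts => by
      rw [lenI_eq_zero hb (by simp at hts; omega) hp2, zero_mul])]
  rw [Finset.sum_range_succ]
  have hconst : ∀ t ∈ Finset.range p, lenI b L x t * lenI b L y t =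
      (1/(b:ℝ)^L) * (1/(b:ℝ)^L) := by
    intro t ht
    simp only [Finset.mem_range] at ht
    rw [lenI_eq_of_lt hb ht hp1, lenI_eq_of_lt hb ht hq1]
  rw [Finset.sum_congr rfl hconst, Finset.sum_const, Finset.card_range,
    lenI_eq_self hb hp1 hp2, lenI_eq_self hb hq1 hq2, nsmul_eq_mul]
  field_simp

lemma Wv_one (hb : 2 ≤ b) (L : ℕ) : Wv b L 1 1 = 1/(b:ℝ)^L := by
  have hB : (0:ℝ) < (b:ℝ)^L := by positivity
  have hBn : ((b^L : ℕ) : ℝ) = (b:ℝ)^L := by push_cast; ring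
  rw [Wv_eq_sum hb (by norm_num) (by norm_num) L]
  have hconst : ∀ t ∈ Finset.range (b^L), lenI b L (1:ℝ) t * lenI b L (1:ℝ) t =
      (1/(b:ℝ)^L) * (1/(b:ℝ)^L) := by
    intro t ht
    simp only [Finset.mem_range] at ht
    have h1 : ((b^L : ℕ):ℝ)/(b:ℝ)^L ≤ (1:ℝ) := by rw [hBn]; rw [div_self (ne_of_gt hB)]
    rw [lenI_eq_of_lt hb ht h1]
  rw [Finset.sum_congr rfl hconst, Finset.sum_const, Finset.card_range, nsmul_eq_mul, hBn]
  field_simp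

lemma Wv_symm (hb : 2 ≤ b) {x y : ℝ} (hx : x ∈ Set.Icc (0:ℝ) 1)
    (hy : y ∈ Set.Icc (0:ℝ) 1) (L : ℕ) : Wv b L x y = Wv b L y x := by
  rw [Wv_eq_sum hb hx hy L, Wv_eq_sum hb hy hx L]
  exact Finset.sum_congr rfl fun t _ => mul_comm _ _

lemma Wv_nonneg (b L : ℕ) (x y : ℝ) : 0 ≤ Wv b L x y := ENNReal.toReal_nonneg

lemma Wv_zero (hb : 2 ≤ b) {x y : ℝ} (hx : x ∈ Set.Icc (0:ℝ) 1)
    (hy : y ∈ Set.Icc (0:ℝ) 1) : Wv b 0 x y = x * y := by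
  rw [Wv_eq_sum hb hx hy 0]
  simp only [pow_zero, Finset.range_one, Finset.sum_singleton]
  have h1 : lenI b 0 x 0 = x := by
    rw [lenI_eval b 0 hb]
    norm_num
    rw [min_eq_left (by linarith [hx.2]), max_eq_left (by linarith [hx.1])]
  have h2 : lenI b 0 y 0 = y := by
    rw [lenI_eval b 0 hb]
    norm_num
    rw [min_eq_left (by linarith [hy.2]), max_eq_left (by linarith [hy.1])]
  rw [h1, h2]

lemma Wv_anti (hb : 2 ≤ b) {x y : ℝ} (L : ℕ) :
    Wv b (L+1) x y ≤ Wv b L x y := by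
  apply ENNReal.toReal_mono (Aset_vol_ne_top b L _)
  exact measure_mono (Set.inter_subset_inter_right _ (Aset_anti hb L))

end Closed
section AlgIneq
variable {β B0 P0 P1 P2 x y : ℝ}

lemma ineqB (hβ : 2 ≤ β) (hB0 : 0 < B0)
    (h1 : P0 ≤ B0*x) (h2 : B0*y ≤ P0 + 1) :
    P0/(B0*B0) + (x - P0/B0)*(y - P0/B0) + β*(x/(B0*β*β)) ≤ (β+1)*(x/(B0*β)) := by
  have hβ0 : (0:ℝ) < β := by linarith
  have key : 0 ≤ ((B0*x - P0)*(P0 + 1 - B0*y))/(B0*B0) :=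
    div_nonneg (mul_nonneg (by linarith) (by linarith)) (by positivity)
  have hident : (β+1)*(x/(B0*β)) - (P0/(B0*B0) + (x - P0/B0)*(y - P0/B0) + β*(x/(B0*β*β)))
      = ((B0*x - P0)*(P0 + 1 - B0*y))/(B0*B0) := by
    field_simp
    ring
  linarith

lemma ineqOne (hβ : 2 ≤ β) (hB0 : 0 < B0) (hP0 : 0 ≤ P0)
    (hD0 : β*P0 ≤ P1) (hD1 : P1 ≤ β*P0 + (β-1))
    (hx1 : P1 ≤ B0*β*x) (hx2 : B0*β*x ≤ P1 + 1)
    (hy1 : P1 ≤ B0*β*y) (hy2 : B0*β*y ≤ P1 + 1) :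
    P0/(B0*B0) + (x - P0/B0)*(y - P0/B0) ≤
      β*(P1/(B0*β*(B0*β)) + (x - P1/(B0*β))*(y - P1/(B0*β))) := by
  have hβ0 : (0:ℝ) < β := by linarith
  have hident : β*(P1/(B0*β*(B0*β)) + (x - P1/(B0*β))*(y - P1/(B0*β)))
      - (P0/(B0*B0) + (x - P0/B0)*(y - P0/B0))
      = ((P1-β*P0)*(1-(B0*β*x-P1))*(1-(B0*β*y-P1))
        + (β-1-(P1-β*P0))*(B0*β*x-P1)*(B0*β*y-P1)
        + (P1-β*P0)*(β-(P1-β*P0)-1))/((B0*β)*(B0*β)) := by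
    field_simp
    ring
  have key : 0 ≤ ((P1-β*P0)*(1-(B0*β*x-P1))*(1-(B0*β*y-P1))
        + (β-1-(P1-β*P0))*(B0*β*x-P1)*(B0*β*y-P1)
        + (P1-β*P0)*(β-(P1-β*P0)-1))/((B0*β)*(B0*β)) := by
    apply div_nonneg _ (by positivity)
    have t1 : 0 ≤ (P1-β*P0)*(1-(B0*β*x-P1))*(1-(B0*β*y-P1)) :=
      mul_nonneg (mul_nonneg (by linarith) (by linarith)) (by linarith)
    have t2 : 0 ≤ (β-1-(P1-β*P0))*(B0*β*x-P1)*(B0*β*y-P1) :=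
      mul_nonneg (mul_nonneg (by linarith) (by linarith)) (by linarith)
    have t3 : 0 ≤ (P1-β*P0)*(β-(P1-β*P0)-1) :=
      mul_nonneg (by linarith) (by linarith)
    linarith
  linarith

lemma ineqC (hβ : 2 ≤ β) (hB0 : 0 < B0)
    (hD0 : β*P0 ≤ P1) (hD1 : P1 ≤ β*P0 + (β-1))
    (hA0 : 0 ≤ B0*β*β*x - β*P1) (hA1 : B0*β*β*x - β*P1 ≤ β-1)
    (hC0 : 1 ≤ B0*β*β*y - β*P1) (hC1 : B0*β*β*y - β*P1 ≤ β) :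
    P0/(B0*B0) + (x - P0/B0)*(y - P0/B0) + β*(x/(B0*β*β)) ≤
      (β+1)*(P1/(B0*β*(B0*β)) + (x - P1/(B0*β))*(y - P1/(B0*β))) := by
  have hβ0 : (0:ℝ) < β := by linarith
  set A := B0*β*β*x - β*P1 with hA
  set C := B0*β*β*y - β*P1 with hC
  set D := P1 - β*P0 with hD
  have hident : (β+1)*(P1/(B0*β*(B0*β)) + (x - P1/(B0*β))*(y - P1/(B0*β)))
      - (P0/(B0*B0) + (x - P0/B0)*(y - P0/B0) + β*(x/(B0*β*β)))
      = (D*(β*β - β*D - A - C) + A*C - A)/((B0*β)*(B0*β)*β) := by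
    rw [hA, hC, hD]
    field_simp
    ring
  have key : 0 ≤ (D*(β*β - β*D - A - C) + A*C - A)/((B0*β)*(B0*β)*β) := by
    apply div_nonneg _ (by positivity)
    have hD0' : 0 ≤ D := by rw [hD]; linarith
    have hD1' : D ≤ β - 1 := by rw [hD]; linarith
    rcases le_or_gt D A with h|h
    · have p1 : 0 ≤ (C-1)*(A-D) := mul_nonneg (by linarith) (by linarith)
      have p2 : 0 ≤ D*(β*β-β*D-A-1) := mul_nonneg hD0' (by nlinarith)
      nlinarith
    · have p1 : 0 ≤ (β-C)*(D-A) := mul_nonneg (by linarith) (by linarith)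
      have p2 : 0 ≤ D*β*(β-D-1) + A*(β-1-D) :=
        add_nonneg (mul_nonneg (mul_nonneg hD0' hβ0.le) (by linarith))
          (mul_nonneg (by linarith) (by linarith))
      nlinarith
  linarith

set_option maxHeartbeats 2000000 in
lemma ineqD (hβ : 2 ≤ β) (hB0 : 0 < B0)
    (hD0 : β*P0 ≤ P1) (hD1 : P1 ≤ β*P0 + (β-1))
    (hE0 : β*P1 ≤ P2) (hE1 : P2 ≤ β*P1 + (β-1))
    (hx1 : P2 ≤ B0*β*β*x) (hx2 : B0*β*β*x ≤ P2 + 1)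
    (hy1 : P2 ≤ B0*β*β*y) (hy2 : B0*β*β*y ≤ P2 + 1)
    (hI1 : 0 ≤ ((P2-β*P1) - (P1-β*P0))*((P2-β*P1) - (P1-β*P0) - 1))
    (hI2 : 0 ≤ ((P2-β*P1) - (P1-β*P0))*((P2-β*P1) - (P1-β*P0) + 1)) :
    P0/(B0*B0) + (x - P0/B0)*(y - P0/B0)
      + β*(P2/(B0*β*β*(B0*β*β)) + (x - P2/(B0*β*β))*(y - P2/(B0*β*β))) ≤
      (β+1)*(P1/(B0*β*(B0*β)) + (x - P1/(B0*β))*(y - P1/(B0*β))) := by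
  have hβ0 : (0:ℝ) < β := by linarith
  set D := P1 - β*P0 with hD
  set E := P2 - β*P1 with hE
  set s := B0*β*β*x + B0*β*β*y - 2*P2 with hs
  have hident : (β+1)*(P1/(B0*β*(B0*β)) + (x - P1/(B0*β))*(y - P1/(B0*β)))
      - (P0/(B0*B0) + (x - P0/B0)*(y - P0/B0)
        + β*(P2/(B0*β*β*(B0*β*β)) + (x - P2/(B0*β*β))*(y - P2/(B0*β*β))))
      = β*((E*E - (2*D+1)*E + D*β*(β-D)) + s*(E-D))/((B0*β*β)*(B0*β*β)) := by
    rw [hD, hE, hs]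
    field_simp
    ring
  have key : 0 ≤ β*((E*E - (2*D+1)*E + D*β*(β-D)) + s*(E-D))/((B0*β*β)*(B0*β*β)) := by
    apply div_nonneg _ (by positivity)
    apply mul_nonneg hβ0.le
    have hD0' : 0 ≤ D := by rw [hD]; linarith
    have hD1' : D ≤ β - 1 := by rw [hD]; linarith
    have hE0' : 0 ≤ E := by rw [hE]; linarith
    have hE1' : E ≤ β - 1 := by rw [hE]; linarith
    have hs0 : 0 ≤ s := by rw [hs]; linarith
    have hs2 : s ≤ 2 := by rw [hs]; linarith
    have hQ : 0 ≤ D*(β*(β-D) - D - 1) := mul_nonneg hD0' (by nlinarith)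
    rcases le_or_gt D E with h|h
    · have p1 : 0 ≤ s*(E-D) := mul_nonneg hs0 (by linarith)
      nlinarith
    · have p1 : 0 ≤ (2-s)*(D-E) := mul_nonneg (by linarith) (by linarith)
      nlinarith
  linarith

end AlgIneq

section MainIneq
variable {b : ℕ}

lemma ineqB0 {β B0 P0 x y : ℝ} (hβ : 2 ≤ β) (hB0 : 0 < B0)
    (h1 : P0 ≤ B0*x) (h2 : B0*y ≤ P0 + 1) :
    P0/(B0*B0) + (x - P0/B0)*(y - P0/B0) ≤ β*(x/(B0*β)) := by
  have hβ0 : (0:ℝ) < β := by linarith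
  have key : 0 ≤ ((B0*x - P0)*(P0 + 1 - B0*y))/(B0*B0) :=
    div_nonneg (mul_nonneg (by linarith) (by linarith)) (by positivity)
  have hident : β*(x/(B0*β)) - (P0/(B0*B0) + (x - P0/B0)*(y - P0/B0))
      = ((B0*x - P0)*(P0 + 1 - B0*y))/(B0*B0) := by
    field_simp
    ring
  linarith

lemma floor_mul_bounds (hb : 2 ≤ b) (z : ℝ) :
    (b:ℤ)*⌊z⌋ ≤ ⌊(b:ℝ)*z⌋ ∧ ⌊(b:ℝ)*z⌋ ≤ (b:ℤ)*⌊z⌋ + ((b:ℤ)-1) := by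
  have hβ0 : (0:ℝ) < b := by positivity
  constructor
  · apply Int.le_floor.2
    push_cast
    nlinarith [Int.floor_le z]
  · have h : ⌊(b:ℝ)*z⌋ < (b:ℤ)*⌊z⌋ + b := by
      apply Int.floor_lt.2
      push_cast
      nlinarith [Int.lt_floor_add_one z]
    omega

lemma int_consec_nonneg (t : ℤ) : 0 ≤ t*(t-1) := by
  rcases le_or_gt t 0 with h|h
  · have := mul_nonneg (neg_nonneg.2 h) (neg_nonneg.2 (by omega : t-1 ≤ 0))
    nlinarith
  · exact mul_nonneg (by omega) (by omega)

lemma int_consec_nonneg' (t : ℤ) : 0 ≤ t*(t+1) := by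
  rcases le_or_gt 0 t with h|h
  · exact mul_nonneg h (by omega)
  · have := mul_nonneg (neg_nonneg.2 h.le) (neg_nonneg.2 (by omega : t+1 ≤ 0))
    nlinarith

set_option maxHeartbeats 4000000 in
lemma Wv_three_aux (hb : 2 ≤ b) {x y : ℝ} (hx : x ∈ Set.Icc (0:ℝ) 1)
    (hy : y ∈ Set.Icc (0:ℝ) 1) (hxy : x ≤ y) (L : ℕ) :
    Wv b L x y + (b:ℝ) * Wv b (L+2) x y ≤ ((b:ℝ)+1) * Wv b (L+1) x y := by
  have hb1 : 1 ≤ b := by omega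
  have hβ : (2:ℝ) ≤ b := by exact_mod_cast hb
  have hB0 : (0:ℝ) < (b:ℝ)^L := by positivity
  have hβ0 : (0:ℝ) < (b:ℝ) := by linarith
  have hB1 : (0:ℝ) < (b:ℝ)^(L+1) := by positivity
  have hB2 : (0:ℝ) < (b:ℝ)^(L+2) := by positivity
  have hpow1 : (b:ℝ)^(L+1) = (b:ℝ)^L*(b:ℝ) := pow_succ _ _
  have hpow2 : (b:ℝ)^(L+2) = (b:ℝ)^L*(b:ℝ)*(b:ℝ) := by
    rw [pow_succ, pow_succ]
  rcases eq_or_lt_of_le hx.2 with hx1|hx1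
  · have hy1 : y = 1 := le_antisymm hy.2 (by rw [← hx1]; exact hxy)
    rw [hx1, hy1, Wv_one hb, Wv_one hb, Wv_one hb, hpow1, hpow2]
    apply le_of_eq
    field_simp
  · have hm0 : ⌊(b:ℝ)^L*x⌋ ≤ ⌊(b:ℝ)^L*y⌋ := Int.floor_le_floor (by nlinarith)
    rcases lt_or_eq_of_le hm0 with hlt0|heq0
    · have hlt1 := floor_lt_asc hb1 (Nat.le_succ L) hlt0
      have hlt2 := floor_lt_asc hb1 (by omega : L ≤ L+2) hlt0
      rw [Wv_split hb hx hy hlt0, Wv_split hb hx hy hlt1, Wv_split hb hx hy hlt2,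
        hpow1, hpow2]
      apply le_of_eq
      field_simp
    · obtain ⟨p0, hfx0, hp0L, hp01, hp02⟩ := floor_facts hb hx L
      have hfy0 : ⌊(b:ℝ)^L*y⌋ = (p0:ℤ) := by rw [← heq0, hfx0]
      have hW0 := Wv_same hb hx hy hfx0 hfy0 hx1
      have hx0le : (p0:ℝ) ≤ (b:ℝ)^L*x := by
        rw [div_le_iff₀ hB0] at hp01; nlinarith
      have hy0lt : (b:ℝ)^L*y < (p0:ℝ)+1 := by
        have h := Int.lt_floor_add_one ((b:ℝ)^L*y)
        rw [hfy0] at h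
        exact_mod_cast h
      have hm1 : ⌊(b:ℝ)^(L+1)*x⌋ ≤ ⌊(b:ℝ)^(L+1)*y⌋ :=
        Int.floor_le_floor (mul_le_mul_of_nonneg_left hxy hB1.le)
      rcases lt_or_eq_of_le hm1 with hlt1|heq1
      · have hlt2 := floor_lt_asc hb1 (by omega : L+1 ≤ L+2) hlt1
        rw [hW0, Wv_split hb hx hy hlt1, Wv_split hb hx hy hlt2, hpow1, hpow2]
        exact ineqB hβ hB0 hx0le hy0lt.le
      · obtain ⟨p1, hfx1, hp1L, hp11, hp12⟩ := floor_facts hb hx (L+1)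
        have hfy1 : ⌊(b:ℝ)^(L+1)*y⌋ = (p1:ℤ) := by rw [← heq1, hfx1]
        have hW1 := Wv_same hb hx hy hfx1 hfy1 hx1
        -- digit bounds at level L+1
        have hdig1 := floor_mul_bounds hb ((b:ℝ)^L*x)
        rw [← pow_succ_mul, hfx0, hfx1] at hdig1
        have hD0r : (b:ℝ)*(p0:ℝ) ≤ (p1:ℝ) := by exact_mod_cast hdig1.1
        have hD1r : (p1:ℝ) ≤ (b:ℝ)*(p0:ℝ) + ((b:ℝ)-1) := by
          have := hdig1.2; push_cast at this ⊢; exact_mod_cast this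
        have hx1le : (p1:ℝ) ≤ (b:ℝ)^(L+1)*x := by
          rw [div_le_iff₀ hB1] at hp11; nlinarith
        have hy1lt : (b:ℝ)^(L+1)*y < (p1:ℝ)+1 := by
          have h := Int.lt_floor_add_one ((b:ℝ)^(L+1)*y)
          rw [hfy1] at h
          exact_mod_cast h
        have hy1le : (p1:ℝ) ≤ (b:ℝ)^(L+1)*y := by
          have h := Int.floor_le ((b:ℝ)^(L+1)*y)
          rw [hfy1] at h
          exact_mod_cast h
        have hm2 : ⌊(b:ℝ)^(L+2)*x⌋ ≤ ⌊(b:ℝ)^(L+2)*y⌋ :=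
          Int.floor_le_floor (mul_le_mul_of_nonneg_left hxy hB2.le)
        -- digit bounds at level L+2 (for x and for y)
        have hdig2x := floor_mul_bounds hb ((b:ℝ)^(L+1)*x)
        rw [← pow_succ_mul, hfx1] at hdig2x
        have hdig2y := floor_mul_bounds hb ((b:ℝ)^(L+1)*y)
        rw [← pow_succ_mul, hfy1] at hdig2y
        rcases lt_or_eq_of_le hm2 with hlt2|heq2
        · obtain ⟨p2, hfx2, hp2L, hp21, hp22⟩ := floor_facts hb hx (L+2)
          obtain ⟨q2, hfy2, hq2L, hq21, hq22⟩ := floor_facts hb hy (L+2)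
          rw [hfx2] at hdig2x
          rw [hfy2] at hdig2y
          have hpq2 : (p2:ℤ) < (q2:ℤ) := by rw [hfx2, hfy2] at hlt2; exact hlt2
          have hxB2 : (p2:ℝ) ≤ (b:ℝ)^(L+2)*x := by
            rw [div_le_iff₀ hB2] at hp21; nlinarith
          have hxB2' : (b:ℝ)^(L+2)*x < (p2:ℝ)+1 := by
            have h := Int.lt_floor_add_one ((b:ℝ)^(L+2)*x)
            rw [hfx2] at h
            exact_mod_cast h
          have hyB2 : (q2:ℝ) ≤ (b:ℝ)^(L+2)*y := by
            rw [div_le_iff₀ hB2] at hq21; nlinarith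
          have hyB2' : (b:ℝ)^(L+2)*y < (q2:ℝ)+1 := by
            have h := Int.lt_floor_add_one ((b:ℝ)^(L+2)*y)
            rw [hfy2] at h
            exact_mod_cast h
          -- integer chains to real bounds
          have hiA : (b:ℤ)*p1 ≤ p2 := hdig2x.1
          have hiB : (q2:ℤ) ≤ (b:ℤ)*p1 + ((b:ℤ)-1) := hdig2y.2
          have hiC : (p2:ℤ)+1 ≤ q2 := by omega
          have hA0 : 0 ≤ (b:ℝ)^L*(b:ℝ)*(b:ℝ)*x - (b:ℝ)*(p1:ℝ) := by
            have h1 : ((b:ℝ)*(p1:ℝ)) ≤ (p2:ℝ) := by exact_mod_cast hiA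
            rw [← hpow2]; linarith
          have hA1 : (b:ℝ)^L*(b:ℝ)*(b:ℝ)*x - (b:ℝ)*(p1:ℝ) ≤ (b:ℝ)-1 := by
            have h1 : (p2:ℝ)+1 ≤ (q2:ℝ) := by exact_mod_cast hiC
            have h2 : (q2:ℝ) ≤ (b:ℝ)*(p1:ℝ) + ((b:ℝ)-1) := by exact_mod_cast hiB
            rw [← hpow2]; linarith
          have hC0 : 1 ≤ (b:ℝ)^L*(b:ℝ)*(b:ℝ)*y - (b:ℝ)*(p1:ℝ) := by
            have h1 : ((b:ℝ)*(p1:ℝ))+1 ≤ (p2:ℝ)+1 := by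
              have : ((b:ℝ)*(p1:ℝ)) ≤ (p2:ℝ) := by exact_mod_cast hiA
              linarith
            have h2 : (p2:ℝ)+1 ≤ (q2:ℝ) := by exact_mod_cast hiC
            rw [← hpow2]; linarith
          have hC1 : (b:ℝ)^L*(b:ℝ)*(b:ℝ)*y - (b:ℝ)*(p1:ℝ) ≤ (b:ℝ) := by
            have h2 : (q2:ℝ) ≤ (b:ℝ)*(p1:ℝ) + ((b:ℝ)-1) := by exact_mod_cast hiB
            rw [← hpow2]; linarith
          rw [hW0, hW1, Wv_split hb hx hy hlt2, hpow1, hpow2]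
          exact ineqC hβ hB0 hD0r hD1r hA0 hA1 hC0 hC1
        · obtain ⟨p2, hfx2, hp2L, hp21, hp22⟩ := floor_facts hb hx (L+2)
          have hfy2 : ⌊(b:ℝ)^(L+2)*y⌋ = (p2:ℤ) := by rw [← heq2, hfx2]
          have hW2 := Wv_same hb hx hy hfx2 hfy2 hx1
          rw [hfx2] at hdig2x
          have hE0r : (b:ℝ)*(p1:ℝ) ≤ (p2:ℝ) := by exact_mod_cast hdig2x.1
          have hE1r : (p2:ℝ) ≤ (b:ℝ)*(p1:ℝ) + ((b:ℝ)-1) := by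
            have := hdig2x.2; push_cast at this ⊢; exact_mod_cast this
          have hx2le : (p2:ℝ) ≤ (b:ℝ)^(L+2)*x := by
            rw [div_le_iff₀ hB2] at hp21; nlinarith
          have hx2lt : (b:ℝ)^(L+2)*x < (p2:ℝ)+1 := by
            have h := Int.lt_floor_add_one ((b:ℝ)^(L+2)*x)
            rw [hfx2] at h
            exact_mod_cast h
          have hy2le : (p2:ℝ) ≤ (b:ℝ)^(L+2)*y := by
            have h := Int.floor_le ((b:ℝ)^(L+2)*y)
            rw [hfy2] at h
            exact_mod_cast h
          have hy2lt : (b:ℝ)^(L+2)*y < (p2:ℝ)+1 := by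
            have h := Int.lt_floor_add_one ((b:ℝ)^(L+2)*y)
            rw [hfy2] at h
            exact_mod_cast h
          -- integer facts
          have hDint : ((p1:ℤ) - b*p0) - ((p1:ℤ) - b*p0) = 0 := by ring
          have hI1 : 0 ≤ (((p2:ℝ)-(b:ℝ)*(p1:ℝ)) - ((p1:ℝ)-(b:ℝ)*(p0:ℝ)))*
              ((((p2:ℝ)-(b:ℝ)*(p1:ℝ)) - ((p1:ℝ)-(b:ℝ)*(p0:ℝ))) - 1) := by
            have h := int_consec_nonneg (((p2:ℤ)-(b:ℤ)*p1) - ((p1:ℤ)-(b:ℤ)*p0))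
            have h2 : (0:ℝ) ≤ ((((p2:ℤ)-(b:ℤ)*p1) - ((p1:ℤ)-(b:ℤ)*p0)) *
                ((((p2:ℤ)-(b:ℤ)*p1) - ((p1:ℤ)-(b:ℤ)*p0)) - 1) : ℤ) := by exact_mod_cast h
            push_cast at h2
            linarith
          have hI2 : 0 ≤ (((p2:ℝ)-(b:ℝ)*(p1:ℝ)) - ((p1:ℝ)-(b:ℝ)*(p0:ℝ)))*
              ((((p2:ℝ)-(b:ℝ)*(p1:ℝ)) - ((p1:ℝ)-(b:ℝ)*(p0:ℝ))) + 1) := by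
            have h := int_consec_nonneg' (((p2:ℤ)-(b:ℤ)*p1) - ((p1:ℤ)-(b:ℤ)*p0))
            have h2 : (0:ℝ) ≤ ((((p2:ℤ)-(b:ℤ)*p1) - ((p1:ℤ)-(b:ℤ)*p0)) *
                ((((p2:ℤ)-(b:ℤ)*p1) - ((p1:ℤ)-(b:ℤ)*p0)) + 1) : ℤ) := by exact_mod_cast h
            push_cast at h2
            linarith
          rw [hW0, hW1, hW2, hpow1, hpow2]
          refine ineqD hβ hB0 hD0r hD1r ?_ ?_ ?_ ?_ ?_ ?_ hI1 hI2
          · exact hE0r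
          · exact hE1r
          · rw [← hpow2]; exact hx2le
          · rw [← hpow2]; exact hx2lt.le
          · rw [← hpow2]; exact hy2le
          · rw [← hpow2]; exact hy2lt.le

lemma Wv_three (hb : 2 ≤ b) {x y : ℝ} (hx : x ∈ Set.Icc (0:ℝ) 1)
    (hy : y ∈ Set.Icc (0:ℝ) 1) (L : ℕ) :
    Wv b L x y + (b:ℝ) * Wv b (L+2) x y ≤ ((b:ℝ)+1) * Wv b (L+1) x y := by
  rcases le_total x y with h|h
  · exact Wv_three_aux hb hx hy h L
  · rw [Wv_symm hb hx hy L, Wv_symm hb hx hy (L+2), Wv_symm hb hx hy (L+1)]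
    exact Wv_three_aux hb hy hx h L

end MainIneq

section TCoef
variable {b : ℕ}

set_option maxHeartbeats 1000000 in
lemma Wv_le_aux (hb : 2 ≤ b) {x y : ℝ} (hx : x ∈ Set.Icc (0:ℝ) 1)
    (hy : y ∈ Set.Icc (0:ℝ) 1) (hxy : x ≤ y) (L : ℕ) :
    Wv b L x y ≤ (b:ℝ) * Wv b (L+1) x y := by
  have hb1 : 1 ≤ b := by omega
  have hβ : (2:ℝ) ≤ b := by exact_mod_cast hb
  have hB0 : (0:ℝ) < (b:ℝ)^L := by positivity
  have hβ0 : (0:ℝ) < (b:ℝ) := by linarith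
  have hB1 : (0:ℝ) < (b:ℝ)^(L+1) := by positivity
  have hpow1 : (b:ℝ)^(L+1) = (b:ℝ)^L*(b:ℝ) := pow_succ _ _
  rcases eq_or_lt_of_le hx.2 with hx1|hx1
  · have hy1 : y = 1 := le_antisymm hy.2 (by rw [← hx1]; exact hxy)
    rw [hx1, hy1, Wv_one hb, Wv_one hb, hpow1]
    apply le_of_eq
    field_simp
  · have hm0 : ⌊(b:ℝ)^L*x⌋ ≤ ⌊(b:ℝ)^L*y⌋ :=
      Int.floor_le_floor (mul_le_mul_of_nonneg_left hxy hB0.le)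
    rcases lt_or_eq_of_le hm0 with hlt0|heq0
    · have hlt1 := floor_lt_asc hb1 (Nat.le_succ L) hlt0
      rw [Wv_split hb hx hy hlt0, Wv_split hb hx hy hlt1, hpow1]
      apply le_of_eq
      field_simp
    · obtain ⟨p0, hfx0, hp0L, hp01, hp02⟩ := floor_facts hb hx L
      have hfy0 : ⌊(b:ℝ)^L*y⌋ = (p0:ℤ) := by rw [← heq0, hfx0]
      have hW0 := Wv_same hb hx hy hfx0 hfy0 hx1
      have hx0le : (p0:ℝ) ≤ (b:ℝ)^L*x := by
        rw [div_le_iff₀ hB0] at hp01; nlinarith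
      have hy0lt : (b:ℝ)^L*y < (p0:ℝ)+1 := by
        have h := Int.lt_floor_add_one ((b:ℝ)^L*y)
        rw [hfy0] at h
        exact_mod_cast h
      have hm1 : ⌊(b:ℝ)^(L+1)*x⌋ ≤ ⌊(b:ℝ)^(L+1)*y⌋ :=
        Int.floor_le_floor (mul_le_mul_of_nonneg_left hxy hB1.le)
      rcases lt_or_eq_of_le hm1 with hlt1|heq1
      · rw [hW0, Wv_split hb hx hy hlt1, hpow1]
        exact ineqB0 hβ hB0 hx0le hy0lt.le
      · obtain ⟨p1, hfx1, hp1L, hp11, hp12⟩ := floor_facts hb hx (L+1)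
        have hfy1 : ⌊(b:ℝ)^(L+1)*y⌋ = (p1:ℤ) := by rw [← heq1, hfx1]
        have hW1 := Wv_same hb hx hy hfx1 hfy1 hx1
        have hdig1 := floor_mul_bounds hb ((b:ℝ)^L*x)
        rw [← pow_succ_mul, hfx0, hfx1] at hdig1
        have hD0r : (b:ℝ)*(p0:ℝ) ≤ (p1:ℝ) := by exact_mod_cast hdig1.1
        have hD1r : (p1:ℝ) ≤ (b:ℝ)*(p0:ℝ) + ((b:ℝ)-1) := by
          have := hdig1.2; push_cast at this ⊢; exact_mod_cast this
        have hx1le : (p1:ℝ) ≤ (b:ℝ)^(L+1)*x := by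
          rw [div_le_iff₀ hB1] at hp11; nlinarith
        have hx1lt : (b:ℝ)^(L+1)*x < (p1:ℝ)+1 := by
          have h := Int.lt_floor_add_one ((b:ℝ)^(L+1)*x)
          rw [hfx1] at h
          exact_mod_cast h
        have hy1le : (p1:ℝ) ≤ (b:ℝ)^(L+1)*y := by
          have h := Int.floor_le ((b:ℝ)^(L+1)*y)
          rw [hfy1] at h
          exact_mod_cast h
        have hy1lt : (b:ℝ)^(L+1)*y < (p1:ℝ)+1 := by
          have h := Int.lt_floor_add_one ((b:ℝ)^(L+1)*y)
          rw [hfy1] at h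
          exact_mod_cast h
        rw [hW0, hW1, hpow1]
        refine ineqOne hβ hB0 (by positivity) hD0r hD1r ?_ ?_ ?_ ?_
        · rw [← hpow1]; exact hx1le
        · rw [← hpow1]; exact hx1lt.le
        · rw [← hpow1]; exact hy1le
        · rw [← hpow1]; exact hy1lt.le

lemma Wv_le_b (hb : 2 ≤ b) {x y : ℝ} (hx : x ∈ Set.Icc (0:ℝ) 1)
    (hy : y ∈ Set.Icc (0:ℝ) 1) (L : ℕ) :
    Wv b L x y ≤ (b:ℝ) * Wv b (L+1) x y := by
  rcases le_total x y with h|h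
  · exact Wv_le_aux hb hx hy h L
  · rw [Wv_symm hb hx hy L, Wv_symm hb hx hy (L+1)]
    exact Wv_le_aux hb hy hx h L

lemma tCoef_nonneg (hb : 2 ≤ b) {x y : ℝ} (hx : x ∈ Set.Icc (0:ℝ) 1)
    (hy : y ∈ Set.Icc (0:ℝ) 1) : ∀ k, 0 ≤ tCoef b x y k := by
  have hβ : (2:ℝ) ≤ b := by exact_mod_cast hb
  have hden : (0:ℝ) < (b:ℝ) - 1 := by linarith
  intro k
  match k with
  | 0 =>
    rw [tCoef]
    apply div_nonneg _ hden.le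
    apply mul_nonneg (by linarith)
    rw [Vi_eq_sub hb hx hy 0, sub_nonneg]
    exact Wv_anti hb 0
  | (m+1) =>
    rw [tCoef]
    apply div_nonneg _ hden.le
    rw [sub_nonneg, Vi_eq_sub hb hx hy (m+1), Vi_eq_sub hb hx hy m]
    have h3 := Wv_three hb hx hy m
    nlinarith [h3]

lemma sum_tCoef_eq (hb : 2 ≤ b) {x y : ℝ} (hx : x ∈ Set.Icc (0:ℝ) 1)
    (hy : y ∈ Set.Icc (0:ℝ) 1) (N : ℕ) :
    ∑ m ∈ Finset.range (N+1), tCoef b x y m =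
      (Wv b 0 x y - Wv b N x y) +
        (b:ℝ)*(Wv b N x y - Wv b (N+1) x y)/((b:ℝ)-1) := by
  have hβ : (2:ℝ) ≤ b := by exact_mod_cast hb
  have hden : ((b:ℝ) - 1) ≠ 0 := by intro h; nlinarith
  induction N with
  | zero =>
    rw [Finset.sum_range_one, tCoef, Vi_eq_sub hb hx hy 0]
    field_simp
    ring
  | succ N ih =>
    rw [Finset.sum_range_succ, ih, tCoef, Vi_eq_sub hb hx hy (N+1), Vi_eq_sub hb hx hy N]
    field_simp
    ring

lemma sum_tCoef_le (hb : 2 ≤ b) {x y : ℝ} (hx : x ∈ Set.Icc (0:ℝ) 1)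
    (hy : y ∈ Set.Icc (0:ℝ) 1) (N : ℕ) :
    ∑ m ∈ Finset.range (N+1), tCoef b x y m ≤ x * y := by
  have hβ : (2:ℝ) ≤ b := by exact_mod_cast hb
  have hden : (0:ℝ) < (b:ℝ) - 1 := by linarith
  rw [sum_tCoef_eq hb hx hy N, ← Wv_zero hb hx hy]
  have hkey := Wv_le_b hb hx hy N
  have h2 : (b:ℝ)*(Wv b N x y - Wv b (N+1) x y)/((b:ℝ)-1) ≤ Wv b N x y := by
    rw [div_le_iff₀ hden]
    nlinarith [hkey]
  linarith

lemma sum_pow_tCoef (hb : 2 ≤ b) (x y : ℝ) (G : ℕ) :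
    ∑ m ∈ Finset.range (G+1), (b:ℝ)^m * tCoef b x y m =
      (b:ℝ)^(G+1) * Vi b G x y / ((b:ℝ)-1) := by
  have hβ : (2:ℝ) ≤ b := by exact_mod_cast hb
  have hden : ((b:ℝ) - 1) ≠ 0 := by intro h; nlinarith
  induction G with
  | zero =>
    rw [Finset.sum_range_one, tCoef]
    rw [pow_zero, pow_one, one_mul]
  | succ G ih =>
    rw [Finset.sum_range_succ, ih, tCoef]
    field_simp
    ring

end TCoef

section IntegralPart
variable {b n s : ℕ}

lemma measurableSet_DsetS (hb : 2 ≤ b) (s : ℕ) (i : Fin s → ℕ) :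
    MeasurableSet (DsetS b s i) := by
  have hrw : DsetS b s i = ⋂ j, (fun p : (Fin s → ℝ) × (Fin s → ℝ) =>
      (p.1 j, p.2 j)) ⁻¹' (Dset b (i j)) := by
    ext p
    simp only [DsetS, Set.mem_setOf_eq, Set.mem_iInter, Set.mem_preimage, Dset]
    constructor
    · rintro ⟨h1, h2, h3⟩ j; exact ⟨h1 j, h2 j, h3 j⟩
    · intro h; exact ⟨fun j => (h j).1, fun j => (h j).2.1, fun j => (h j).2.2⟩
  rw [hrw]
  refine MeasurableSet.iInter fun j => ?_
  exact (measurableSet_Dset hb (i j)).preimage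
    (((measurable_pi_apply j).comp measurable_fst).prodMk
      ((measurable_pi_apply j).comp measurable_snd))

lemma measurableSet_Rset (s : ℕ) (x y : Fin s → ℝ) : MeasurableSet (Rset s x y) :=
  (MeasurableSet.univ_pi fun _ => measurableSet_Ico).prod
    (MeasurableSet.univ_pi fun _ => measurableSet_Ico)

lemma Rset_vol_ne_top (s : ℕ) (x y : Fin s → ℝ) : volume (Rset s x y) ≠ ⊤ := by
  rw [Rset, Measure.volume_eq_prod, Measure.prod_prod, volume_pi_pi, volume_pi_pi]
  simp only [Real.volume_Ico]
  exact ENNReal.mul_ne_top (ENNReal.prod_ne_top fun j _ => ENNReal.ofReal_ne_top)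
    (ENNReal.prod_ne_top fun j _ => ENNReal.ofReal_ne_top)

lemma vol_RD (hb : 2 ≤ b) (x y : Fin s → ℝ)
    (i : Fin s → ℕ) :
    (volume (Rset s x y ∩ DsetS b s i)).toReal = ∏ j, Vi b (i j) (x j) (y j) := by
  have hmp := volume_measurePreserving_arrowProdEquivProdArrow ℝ ℝ (Fin s)
  set T := MeasurableEquiv.arrowProdEquivProdArrow ℝ ℝ (Fin s) with hT
  have hpre : T ⁻¹' (Rset s x y ∩ DsetS b s i) =
      Set.univ.pi (fun j => (Set.Ico 0 (x j) ×ˢ Set.Ico 0 (y j)) ∩ Dset b (i j)) := by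
    ext f
    simp only [Set.mem_preimage, Set.mem_inter_iff, Rset, DsetS, Set.mem_prod,
      Set.mem_pi, Set.mem_univ, forall_true_left, Set.mem_setOf_eq, hT,
      MeasurableEquiv.arrowProdEquivProdArrow, Equiv.arrowProdEquivProdArrow,
      MeasurableEquiv.coe_mk, Equiv.coe_fn_mk, Dset]
    constructor
    · rintro ⟨⟨h1, h2⟩, h3, h4, h5⟩ j
      exact ⟨⟨h1 j, h2 j⟩, h3 j, h4 j, h5 j⟩
    · intro h
      exact ⟨⟨fun j => (h j).1.1, fun j => (h j).1.2⟩, fun j => (h j).2.1,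
        fun j => (h j).2.2.1, fun j => (h j).2.2.2⟩
  have hmeas : MeasurableSet (Rset s x y ∩ DsetS b s i) :=
    (measurableSet_Rset s x y).inter (measurableSet_DsetS hb s i)
  rw [← hmp.measure_preimage hmeas.nullMeasurableSet, hpre, volume_pi_pi,
    ENNReal.toReal_prod]
  rfl

end IntegralPart

section Main1
variable {b n s : ℕ}

/-- the finite support candidate set -/
noncomputable def Fsupp (b : ℕ) {n s : ℕ} (P : Fin n → Fin s → ℝ) : Finset (Fin s → ℕ) :=
  Finset.image (fun q : Fin n × Fin n => fun r => (gammaB b (P q.1 r) (P q.2 r)).toNat)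
    Finset.univ

noncomputable def cC (b : ℕ) {n s : ℕ} (P : Fin n → Fin s → ℝ) (i : Fin s → ℕ) : ℝ :=
  (NB b P i : ℝ) * (b:ℝ)^(s + ∑ j, i j) / (((b:ℝ)-1)^s * ((n:ℝ)*((n:ℝ)-1)))

lemma NB_eq_zero_of_not_mem (P : Fin n → Fin s → ℝ) {i : Fin s → ℕ}
    (hiF : i ∉ Fsupp b P) : NB b P i = 0 := by
  by_contra hne
  obtain ⟨l, -, hl⟩ := Finset.exists_ne_zero_of_sum_ne_zero hne
  obtain ⟨j, hj⟩ := Finset.card_ne_zero.1 hl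
  rw [Finset.mem_filter] at hj
  obtain ⟨-, hjl, hcond⟩ := hj
  refine hiF (Finset.mem_image.2 ⟨(l, j), Finset.mem_univ _, ?_⟩)
  funext r
  have h := congrArg ENat.toNat (hcond r)
  simpa using h

lemma psi_eq_on_Rset (hb : 2 ≤ b) (P : Fin n → Fin s → ℝ) {x y : Fin s → ℝ}
    (hx : ∀ j, x j ∈ Set.Icc (0:ℝ) 1) (hy : ∀ j, y j ∈ Set.Icc (0:ℝ) 1)
    {p : (Fin s → ℝ) × (Fin s → ℝ)} (hp : p ∈ Rset s x y) :
    psi b P p.1 p.2 = ∑ i ∈ Fsupp b P, (DsetS b s i).indicator (fun _ => cC b P i) p := by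
  have hp1 : ∀ j, p.1 j ∈ Set.Ico (0:ℝ) 1 := fun j =>
    ⟨(hp.1 j (Set.mem_univ j)).1, lt_of_lt_of_le (hp.1 j (Set.mem_univ j)).2 (hx j).2⟩
  have hp2 : ∀ j, p.2 j ∈ Set.Ico (0:ℝ) 1 := fun j =>
    ⟨(hp.2 j (Set.mem_univ j)).1, lt_of_lt_of_le (hp.2 j (Set.mem_univ j)).2 (hy j).2⟩
  by_cases hfin : ∀ j, gammaB b (p.1 j) (p.2 j) ≠ ⊤
  · set g : Fin s → ℕ := fun j => (gammaB b (p.1 j) (p.2 j)).toNat with hg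
    have hgcoe : ∀ j, gammaB b (p.1 j) (p.2 j) = ((g j : ℕ) : ℕ∞) := fun j =>
      (ENat.coe_toNat (hfin j)).symm
    have hmemD : ∀ i : Fin s → ℕ, p ∈ DsetS b s i ↔ i = g := by
      intro i
      constructor
      · rintro ⟨-, -, h3⟩
        funext j
        have h := h3 j
        rw [hgcoe j] at h
        exact_mod_cast h.symm
      · rintro rfl
        exact ⟨hp1, hp2, fun j => hgcoe j⟩
    have hpsi : psi b P p.1 p.2 = cC b P g := by
      rw [psi, if_pos hfin]
      rfl
    rw [hpsi]
    by_cases hgF : g ∈ Fsupp b P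
    · rw [Finset.sum_eq_single_of_mem g hgF (fun i hi hig =>
        Set.indicator_of_notMem (fun hmem => hig ((hmemD i).1 hmem)) _)]
      rw [Set.indicator_of_mem ((hmemD g).2 rfl)]
    · have hNg : NB b P g = 0 := NB_eq_zero_of_not_mem P hgF
      rw [Finset.sum_eq_zero (fun i hi =>
        Set.indicator_of_notMem (fun hmem => hgF (((hmemD i).1 hmem) ▸ hi)) _)]
      rw [cC, hNg]
      simp
  · rw [psi, if_neg hfin]
    push_neg at hfin
    obtain ⟨j0, hj0⟩ := hfin
    refine (Finset.sum_eq_zero fun i hi => Set.indicator_of_notMem (fun hmem => ?_) _).symm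
    have h := hmem.2.2 j0
    rw [hj0] at h
    exact (by simp : ((i j0 : ℕ):ℕ∞) ≠ ⊤) h.symm

lemma integral_psi_eq (hb : 2 ≤ b) (P : Fin n → Fin s → ℝ) {x y : Fin s → ℝ}
    (hx : ∀ j, x j ∈ Set.Icc (0:ℝ) 1) (hy : ∀ j, y j ∈ Set.Icc (0:ℝ) 1) :
    ∫ p in Rset s x y, psi b P p.1 p.2 =
      ∑ i ∈ Fsupp b P, cC b P i * ∏ j, Vi b (i j) (x j) (y j) := by
  rw [setIntegral_congr_fun (measurableSet_Rset s x y)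
    (fun p hp => psi_eq_on_Rset hb P hx hy hp)]
  rw [integral_finset_sum _ (fun i _ =>
    (Integrable.indicator (integrableOn_const (Rset_vol_ne_top s x y))
      (measurableSet_DsetS hb s i)))]
  refine Finset.sum_congr rfl fun i _ => ?_
  rw [setIntegral_indicator (measurableSet_DsetS hb s i), setIntegral_const,
    smul_eq_mul, measureReal_def, vol_RD hb x y i, mul_comm]

end Main1

section Main2
variable {b n s : ℕ}

noncomputable def gf (b : ℕ) {n s : ℕ} (P : Fin n → Fin s → ℝ) (l j : Fin n) (r : Fin s) : ℕ :=
  (gammaB b (P l r) (P j r)).toNat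

lemma gam_coe (hb : 2 ≤ b) {P : Fin n → Fin s → ℝ} (hP : ∀ i j, P i j ∈ Set.Ico (0:ℝ) 1)
    (hdist : ∀ j : Fin s, Function.Injective fun i => P i j)
    {l j : Fin n} (hjl : j ≠ l) (r : Fin s) :
    gammaB b (P l r) (P j r) = ((gf b P l j r : ℕ) : ℕ∞) := by
  apply gammaB_eq_toNat hb (hP l r) (hP j r)
  intro he
  exact hjl ((hdist r) he.symm)

lemma MB_cast (hb : 2 ≤ b) {P : Fin n → Fin s → ℝ} (hP : ∀ i j, P i j ∈ Set.Ico (0:ℝ) 1)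
    (hdist : ∀ j : Fin s, Function.Injective fun i => P i j) (k : Fin s → ℕ) :
    (MB b P k : ℝ) = ∑ l : Fin n, ∑ j : Fin n,
      if (j ≠ l ∧ ∀ r, k r ≤ gf b P l j r) then (1:ℝ) else 0 := by
  rw [MB, Nat.cast_sum]
  refine Finset.sum_congr rfl fun l _ => ?_
  rw [mB]
  rw [Finset.filter_congr (q := fun j => j ≠ l ∧ ∀ r, k r ≤ gf b P l j r)
    (fun j _ => ?_), Finset.card_filter, Nat.cast_sum]
  · refine Finset.sum_congr rfl fun j _ => ?_
    split <;> simp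
  · constructor
    · rintro ⟨hjl, hcond⟩
      refine ⟨hjl, fun r => ?_⟩
      have h := hcond r
      rw [gam_coe hb hP hdist hjl r] at h
      exact_mod_cast h
    · rintro ⟨hjl, hcond⟩
      refine ⟨hjl, fun r => ?_⟩
      rw [gam_coe hb hP hdist hjl r]
      exact_mod_cast hcond r

lemma NB_cast (hb : 2 ≤ b) {P : Fin n → Fin s → ℝ} (hP : ∀ i j, P i j ∈ Set.Ico (0:ℝ) 1)
    (hdist : ∀ j : Fin s, Function.Injective fun i => P i j) (i : Fin s → ℕ) :
    (NB b P i : ℝ) = ∑ l : Fin n, ∑ j : Fin n,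
      if (j ≠ l ∧ i = fun r => gf b P l j r) then (1:ℝ) else 0 := by
  rw [NB, Nat.cast_sum]
  refine Finset.sum_congr rfl fun l _ => ?_
  rw [nB]
  rw [Finset.filter_congr (q := fun j => j ≠ l ∧ i = fun r => gf b P l j r)
    (fun j _ => ?_), Finset.card_filter, Nat.cast_sum]
  · refine Finset.sum_congr rfl fun j _ => ?_
    split <;> simp
  · constructor
    · rintro ⟨hjl, hcond⟩
      refine ⟨hjl, ?_⟩
      funext r
      have h := hcond r
      rw [gam_coe hb hP hdist hjl r] at h
      exact_mod_cast h.symm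
    · rintro ⟨hjl, hcond⟩
      refine ⟨hjl, fun r => ?_⟩
      rw [gam_coe hb hP hdist hjl r, hcond]

lemma sum_NB_phi (hb : 2 ≤ b) {P : Fin n → Fin s → ℝ}
    (hP : ∀ i j, P i j ∈ Set.Ico (0:ℝ) 1)
    (hdist : ∀ j : Fin s, Function.Injective fun i => P i j)
    (φ : (Fin s → ℕ) → ℝ) :
    ∑ i ∈ Fsupp b P, (NB b P i : ℝ) * φ i =
      ∑ l : Fin n, ∑ j : Fin n, if j ≠ l then φ (fun r => gf b P l j r) else 0 := by
  have hrw : ∀ i ∈ Fsupp b P, (NB b P i : ℝ) * φ i =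
      ∑ l : Fin n, ∑ j : Fin n,
        if (j ≠ l ∧ i = fun r => gf b P l j r) then φ i else 0 := by
    intro i _
    rw [NB_cast hb hP hdist i, Finset.sum_mul]
    refine Finset.sum_congr rfl fun l _ => ?_
    rw [Finset.sum_mul]
    refine Finset.sum_congr rfl fun j _ => ?_
    split <;> simp
  rw [Finset.sum_congr rfl hrw, Finset.sum_comm]
  refine Finset.sum_congr rfl fun l _ => ?_
  rw [Finset.sum_comm]
  refine Finset.sum_congr rfl fun j _ => ?_
  by_cases hjl : j = l
  · simp [hjl]
  · have hmem : (fun r => gf b P l j r) ∈ Fsupp b P :=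
      Finset.mem_image.2 ⟨(l, j), Finset.mem_univ _, rfl⟩
    simp only [hjl, Ne, not_false_iff, true_and, if_true]
    simp [hmem]

lemma inner_sum_eq (hb : 2 ≤ b) {x y : Fin s → ℝ} (g : Fin s → ℕ) (K : ℕ)
    (hK : ∀ r, g r ≤ K) :
    ∑ k ∈ Fintype.piFinset (fun _ : Fin s => Finset.range (K+1)),
      (if (∀ r, k r ≤ g r) then (∏ r, (b:ℝ)^(k r) * tCoef b (x r) (y r) (k r)) else 0)
      = ∏ r, ((b:ℝ)^(g r + 1) * Vi b (g r) (x r) (y r) / ((b:ℝ)-1)) := by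
  have hbox : Finset.filter (fun k : Fin s → ℕ => ∀ r, k r ≤ g r)
      (Fintype.piFinset (fun _ : Fin s => Finset.range (K+1)))
      = Fintype.piFinset (fun r => Finset.range (g r + 1)) := by
    ext k
    simp only [Finset.mem_filter, Fintype.mem_piFinset, Finset.mem_range, Nat.lt_succ_iff]
    constructor
    · rintro ⟨-, h2⟩; exact h2
    · intro h; exact ⟨fun r => le_trans (h r) (hK r), h⟩
  rw [← Finset.sum_filter, hbox, ← Finset.prod_univ_sum
    (t := fun r => Finset.range (g r + 1))
    (f := fun r m => (b:ℝ)^m * tCoef b (x r) (y r) m)]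
  refine Finset.prod_congr rfl fun r _ => ?_
  exact sum_pow_tCoef hb (x r) (y r) (g r)

lemma phi_expand (hb : 2 ≤ b) (hn : 2 ≤ n) (x y : Fin s → ℝ) (i : Fin s → ℕ) :
    (b:ℝ)^(s + ∑ r, i r) / (((b:ℝ)-1)^s * ((n:ℝ)*((n:ℝ)-1))) * ∏ r, Vi b (i r) (x r) (y r)
      = (∏ r, (b:ℝ)^(i r + 1) * Vi b (i r) (x r) (y r) / ((b:ℝ)-1))
        / ((n:ℝ)*((n:ℝ)-1)) := by
  have hb2 : (2:ℝ) ≤ b := by exact_mod_cast hb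
  have hbm1 : ((b:ℝ)-1) ≠ 0 := by nlinarith
  have hn2 : (2:ℝ) ≤ n := by exact_mod_cast hn
  have hnn : ((n:ℝ)*((n:ℝ)-1)) ≠ 0 := by nlinarith
  have e1 : (∏ r : Fin s, (b:ℝ)^(i r + 1)) = (b:ℝ)^(s + ∑ r, i r) := by
    rw [Finset.prod_pow_eq_pow_sum]
    congr 1
    rw [Finset.sum_add_distrib, Finset.sum_const, Finset.card_univ, Fintype.card_fin,
      smul_eq_mul, mul_one]
    omega
  rw [Finset.prod_div_distrib, Finset.prod_const, Finset.prod_mul_distrib, e1,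
    Finset.card_univ, Fintype.card_fin]
  field_simp

end Main2

section Main3
variable {b n s : ℕ}

lemma CB_term_eq (hb : 2 ≤ b) (hn : 2 ≤ n) {P : Fin n → Fin s → ℝ}
    (hP : ∀ i j, P i j ∈ Set.Ico (0:ℝ) 1)
    (hdist : ∀ j : Fin s, Function.Injective fun i => P i j)
    (x y : Fin s → ℝ) (k : Fin s → ℕ) :
    (∏ j, tCoef b (x j) (y j) (k j)) * CB b P k
      = ∑ l : Fin n, ∑ j : Fin n, if (j ≠ l ∧ ∀ r, k r ≤ gf b P l j r) then
          (∏ r, (b:ℝ)^(k r) * tCoef b (x r) (y r) (k r)) / ((n:ℝ)*((n:ℝ)-1)) else 0 := by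
  have hΨ : (∏ j, tCoef b (x j) (y j) (k j)) * CB b P k
      = (∏ r, (b:ℝ)^(k r) * tCoef b (x r) (y r) (k r)) *
        ((MB b P k : ℝ) / ((n:ℝ)*((n:ℝ)-1))) := by
    rw [CB, ← Finset.prod_pow_eq_pow_sum, Finset.prod_mul_distrib]
    ring
  rw [hΨ, MB_cast hb hP hdist k, Finset.sum_div, Finset.mul_sum]
  refine Finset.sum_congr rfl fun l _ => ?_
  rw [Finset.sum_div, Finset.mul_sum]
  refine Finset.sum_congr rfl fun j _ => ?_
  split
  · rw [mul_one_div]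
  · simp

lemma tsum_CB (hb : 2 ≤ b) {P : Fin n → Fin s → ℝ}
    (hP : ∀ i j, P i j ∈ Set.Ico (0:ℝ) 1)
    (hdist : ∀ j : Fin s, Function.Injective fun i => P i j)
    (x y : Fin s → ℝ) (K : ℕ) (hK : ∀ l j r, gf b P l j r ≤ K) :
    ∑' k : Fin s → ℕ, (∏ j, tCoef b (x j) (y j) (k j)) * CB b P k
      = ∑ k ∈ Fintype.piFinset (fun _ : Fin s => Finset.range (K+1)),
          (∏ j, tCoef b (x j) (y j) (k j)) * CB b P k := by
  apply tsum_eq_sum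
  intro k hk
  have hMB : MB b P k = 0 := by
    rw [MB]
    apply Finset.sum_eq_zero
    intro l _
    rw [mB, Finset.card_eq_zero, Finset.filter_eq_empty_iff]
    rintro j - ⟨hjl, hcond⟩
    rw [Fintype.mem_piFinset] at hk
    push_neg at hk
    obtain ⟨r0, hr0⟩ := hk
    rw [Finset.mem_range] at hr0
    have h := hcond r0
    rw [gam_coe hb hP hdist hjl r0] at h
    have h2 : k r0 ≤ gf b P l j r0 := by exact_mod_cast h
    have h3 := hK l j r0
    omega
  rw [CB, hMB]
  simp

theorem stmt16 (b n s : ℕ) (hb : 2 ≤ b) (hs : 1 ≤ s) (hn : 2 ≤ n)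
    (P : Fin n → Fin s → ℝ) (hP : ∀ i j, P i j ∈ Set.Ico (0 : ℝ) 1)
    (hdist : ∀ j : Fin s, Function.Injective fun i => P i j)
    (x y : Fin s → ℝ)
    (hx : ∀ j, x j ∈ Set.Icc (0 : ℝ) 1) (hy : ∀ j, y j ∈ Set.Icc (0 : ℝ) 1) :
    (∫ p in Rset s x y, psi b P p.1 p.2 =
      ∑' k : Fin s → ℕ, (∏ j, tCoef b (x j) (y j) (k j)) * CB b P k) ∧
    ∀ Cmax : ℝ, (∀ k : Fin s → ℕ, CB b P k ≤ Cmax) →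
      (∫ p in Rset s x y, psi b P p.1 p.2) ≤ Cmax * ∏ j, x j * y j := by
  classical
  have hb2 : (2:ℝ) ≤ b := by exact_mod_cast hb
  have hn2 : (2:ℝ) ≤ n := by exact_mod_cast hn
  have hnn : (0:ℝ) < (n:ℝ)*((n:ℝ)-1) := by nlinarith
  set K := (Finset.univ : Finset ((Fin n × Fin n) × Fin s)).sup
    (fun q => gf b P q.1.1 q.1.2 q.2) with hKdef
  have hK : ∀ l j r, gf b P l j r ≤ K := by
    intro l j r
    rw [hKdef]
    exact Finset.le_sup (f := fun q : (Fin n × Fin n) × Fin s => gf b P q.1.1 q.1.2 q.2)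
      (Finset.mem_univ ((l,j),r))
  set Box := Fintype.piFinset (fun _ : Fin s => Finset.range (K+1)) with hBox
  -- the Box sum equals the integral
  have hmain : ∫ p in Rset s x y, psi b P p.1 p.2 =
      ∑ k ∈ Box, (∏ j, tCoef b (x j) (y j) (k j)) * CB b P k := by
    rw [integral_psi_eq hb P hx hy]
    have hR : ∑ k ∈ Box, (∏ j, tCoef b (x j) (y j) (k j)) * CB b P k
        = ∑ l : Fin n, ∑ j : Fin n, if j ≠ l then
            (∏ r, (b:ℝ)^(gf b P l j r + 1) * Vi b (gf b P l j r) (x r) (y r) / ((b:ℝ)-1))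
              / ((n:ℝ)*((n:ℝ)-1)) else 0 := by
      rw [Finset.sum_congr rfl (fun k _ => CB_term_eq hb hn hP hdist x y k), Finset.sum_comm]
      refine Finset.sum_congr rfl fun l _ => ?_
      rw [Finset.sum_comm]
      refine Finset.sum_congr rfl fun j _ => ?_
      by_cases hjl : j = l
      · simp [hjl]
      · simp only [hjl, Ne, not_false_iff, true_and, if_true]
        have hstep : ∀ k ∈ Box, (if (∀ r, k r ≤ gf b P l j r) then
            (∏ r, (b:ℝ)^(k r) * tCoef b (x r) (y r) (k r)) / ((n:ℝ)*((n:ℝ)-1)) else 0)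
            = (if (∀ r, k r ≤ gf b P l j r) then
              (∏ r, (b:ℝ)^(k r) * tCoef b (x r) (y r) (k r)) else 0) / ((n:ℝ)*((n:ℝ)-1)) := by
          intro k _
          split <;> simp
        rw [Finset.sum_congr rfl hstep, ← Finset.sum_div,
          inner_sum_eq hb (fun r => gf b P l j r) K (hK l j)]
    have hL : ∑ i ∈ Fsupp b P, cC b P i * ∏ j, Vi b (i j) (x j) (y j)
        = ∑ l : Fin n, ∑ j : Fin n, if j ≠ l then
            (∏ r, (b:ℝ)^(gf b P l j r + 1) * Vi b (gf b P l j r) (x r) (y r) / ((b:ℝ)-1))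
              / ((n:ℝ)*((n:ℝ)-1)) else 0 := by
      have h1 : ∀ i ∈ Fsupp b P, cC b P i * ∏ j, Vi b (i j) (x j) (y j)
          = (NB b P i : ℝ) *
            ((∏ r, (b:ℝ)^(i r + 1) * Vi b (i r) (x r) (y r) / ((b:ℝ)-1))
              / ((n:ℝ)*((n:ℝ)-1))) := by
        intro i _
        rw [cC, ← phi_expand hb hn x y i]
        ring
      rw [Finset.sum_congr rfl h1, sum_NB_phi hb hP hdist]
    rw [hL, hR]
  have htsum := tsum_CB hb hP hdist x y K hK
  constructor
  · rw [hmain, htsum]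
  · intro Cmax hC
    have hCmax0 : 0 ≤ Cmax := by
      refine le_trans ?_ (hC (fun _ => 0))
      rw [CB]
      apply div_nonneg _ hnn.le
      positivity
    rw [hmain]
    have hstep1 : ∑ k ∈ Box, (∏ j, tCoef b (x j) (y j) (k j)) * CB b P k
        ≤ ∑ k ∈ Box, (∏ j, tCoef b (x j) (y j) (k j)) * Cmax := by
      refine Finset.sum_le_sum fun k _ => ?_
      exact mul_le_mul_of_nonneg_left (hC k)
        (Finset.prod_nonneg fun r _ => tCoef_nonneg hb (hx r) (hy r) (k r))
    have hstep2 : ∑ k ∈ Box, (∏ j, tCoef b (x j) (y j) (k j)) * Cmax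
        = Cmax * ∏ r, (∑ m ∈ Finset.range (K+1), tCoef b (x r) (y r) m) := by
      rw [← Finset.sum_mul, mul_comm, hBox, Finset.prod_univ_sum]
    have hstep3 : ∏ r, (∑ m ∈ Finset.range (K+1), tCoef b (x r) (y r) m)
        ≤ ∏ j, x j * y j := by
      refine Finset.prod_le_prod (fun r _ => ?_) (fun r _ => ?_)
      · exact Finset.sum_nonneg fun m _ => tCoef_nonneg hb (hx r) (hy r) m
      · exact sum_tCoef_le hb (hx r) (hy r) K
    calc ∑ k ∈ Box, (∏ j, tCoef b (x j) (y j) (k j)) * CB b P k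
        ≤ Cmax * ∏ r, (∑ m ∈ Finset.range (K+1), tCoef b (x r) (y r) m) := by
          rw [← hstep2]; exact hstep1
      _ ≤ Cmax * ∏ j, x j * y j := mul_le_mul_of_nonneg_left hstep3 hCmax0

end Main3
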